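/- Let μ be an absolutely α-decaying, Federer, compactly supported measure on ℝ^k, let S ⊆ ℝ^{k−1} be K₁-quasiconvex, f : S → ℝ with ‖f''‖_S ≤ K₂/ρ, and let Γ be the graph of f. Then there is a constant C (depending only on K₁, K₂, μ) such that for every ball B = B(x,ρ) with x ∈ supp(μ) and every 0 < ε ≤ 1, μ of the closed ερ-neighborhood of B ∩ Γ is at most C·ε^{α/2} times μ of the closed √ε·ρ-neighborhood of B ∩ Γ. -/

import Mathlib

open MeasureTheory Metric Set
open scoped RealInnerProductSpace

variable {m : ℕ}

/-- The (topological) support of a measure. -/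
def msupp {X : Type*} [MetricSpace X] [MeasurableSpace X] (μ : Measure X) : Set X :=
  {x | ∀ ρ > 0, 0 < μ (Metric.ball x ρ)}

/-- `μ` is absolutely `α`-decaying with constant `C` at scales `≤ ρ₀`: neighborhoods
of affine hyperplanes intersected with balls centered on the support have small measure. -/
def AbsDecaying (α C ρ₀ : ℝ) (μ : Measure (EuclideanSpace ℝ (Fin (m + 1)))) : Prop :=
  ∀ x ∈ msupp μ, ∀ ρ : ℝ, 0 < ρ → ρ ≤ ρ₀ →
    ∀ (w : EuclideanSpace ℝ (Fin (m + 1))) (t : ℝ), w ≠ 0 → ∀ ε : ℝ, 0 < ε →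
      μ (closedBall x ρ ∩ cthickening (ε * ρ) {y | ⟪y, w⟫ = t}) ≤
        ENNReal.ofReal (C * ε ^ α) * μ (closedBall x ρ)

/-- `μ` is Federer (doubling) with constant `C` at scales `≤ ρ₀`. -/
def Federer (C ρ₀ : ℝ) (μ : Measure (EuclideanSpace ℝ (Fin (m + 1)))) : Prop :=
  ∀ x ∈ msupp μ, ∀ ρ : ℝ, 0 < ρ → ρ ≤ ρ₀ →
    μ (closedBall x (2 * ρ)) ≤ ENNReal.ofReal C * μ (closedBall x ρ)

/-- `S` is `K`-quasiconvex. -/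
def IsQuasiconvex (K : ℝ) (S : Set (EuclideanSpace ℝ (Fin m))) : Prop :=
  ∀ x ∈ S, ∀ y ∈ S, ∃ γ : ℝ → EuclideanSpace ℝ (Fin m),
    ContinuousOn γ (Icc 0 1) ∧ γ 0 = x ∧ γ 1 = y ∧ (∀ t ∈ Icc (0:ℝ) 1, γ t ∈ S) ∧
      eVariationOn γ (Icc 0 1) ≤ ENNReal.ofReal (K * ‖y - x‖)

/-- The graph of `f : S → ℝ`, as a subset of `ℝ^{m+1} = ℝ^m × ℝ`. -/
def graphOf (S : Set (EuclideanSpace ℝ (Fin m))) (f : EuclideanSpace ℝ (Fin m) → ℝ) :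
    Set (EuclideanSpace ℝ (Fin (m + 1))) :=
  {p | ∃ z ∈ S, p = WithLp.toLp 2 (Fin.snoc (WithLp.ofLp z) (f z) : Fin (m + 1) → ℝ)}

def esnoc {m : ℕ} (a : EuclideanSpace ℝ (Fin m)) (s : ℝ) : EuclideanSpace ℝ (Fin (m+1)) :=
  WithLp.toLp 2 (Fin.snoc (WithLp.ofLp a) s : Fin (m + 1) → ℝ)

lemma esnoc_sub_esnoc {m : ℕ} (a b : EuclideanSpace ℝ (Fin m)) (s t : ℝ) :
    esnoc a s - esnoc b t = esnoc (a - b) (s - t) := by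
  ext i
  refine Fin.lastCases ?_ (fun j => ?_) i <;>
    simp [esnoc, Fin.snoc_last, Fin.snoc_castSucc, PiLp.sub_apply]

lemma inner_esnoc_esnoc {m : ℕ} (a b : EuclideanSpace ℝ (Fin m)) (s t : ℝ) :
    ⟪esnoc a s, esnoc b t⟫ = ⟪a, b⟫ + s * t := by
  simp [esnoc, PiLp.inner_apply, Fin.sum_univ_castSucc, RCLike.inner_apply, mul_comm]

lemma norm_esnoc_sq {m : ℕ} (a : EuclideanSpace ℝ (Fin m)) (s : ℝ) :
    ‖esnoc a s‖ ^ 2 = ‖a‖ ^ 2 + s ^ 2 := by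
  rw [← real_inner_self_eq_norm_sq, ← real_inner_self_eq_norm_sq, inner_esnoc_esnoc]; ring

lemma norm_fst_le_norm_esnoc {m : ℕ} (a : EuclideanSpace ℝ (Fin m)) (s : ℝ) :
    ‖a‖ ≤ ‖esnoc a s‖ := by
  have h := norm_esnoc_sq a s
  nlinarith [norm_nonneg a, norm_nonneg (esnoc a s), sq_nonneg s]

lemma one_le_norm_esnoc_one {m : ℕ} (a : EuclideanSpace ℝ (Fin m)) :
    1 ≤ ‖esnoc a 1‖ := by
  have h := norm_esnoc_sq a 1
  nlinarith [norm_nonneg (esnoc a 1), sq_nonneg ‖a‖]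

lemma esnoc_ne_zero {m : ℕ} (a : EuclideanSpace ℝ (Fin m)) : esnoc a 1 ≠ 0 := by
  intro h
  have : (esnoc a 1) (Fin.last m) = (0 : EuclideanSpace ℝ (Fin (m+1))) (Fin.last m) := by rw [h]
  simp [esnoc, Fin.snoc_last] at this
lemma norm_sub_le_of_deriv_along_path {E F : Type*} [NormedAddCommGroup E] [NormedSpace ℝ E]
    [NormedAddCommGroup F] [NormedSpace ℝ F] {g : E → F} {g' : E → E →L[ℝ] F}
    {S : Set E} {γ : ℝ → E} {a b M L : ℝ} (hab : a ≤ b) (hL : 0 ≤ L)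
    (hg : ∀ z ∈ S, HasFDerivWithinAt g (g' z) S z)
    (hM : ∀ t ∈ Icc a b, ‖g' (γ t)‖ ≤ M)
    (hγc : ContinuousOn γ (Icc a b)) (hγS : ∀ t ∈ Icc a b, γ t ∈ S)
    (hvar : eVariationOn γ (Icc a b) ≤ ENNReal.ofReal L) :
    ‖g (γ b) - g (γ a)‖ ≤ M * L := by
  have hM0 : 0 ≤ M := le_trans (norm_nonneg _) (hM a ⟨le_rfl, hab⟩)
  set v : ℝ → ℝ := fun t => (eVariationOn γ (Icc a b ∩ Icc a t)).toReal with hv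
  have hfin : ∀ s : Set ℝ, s ⊆ Icc a b → eVariationOn γ s ≠ ⊤ := fun s hs =>
    ne_top_of_le_ne_top (ne_top_of_le_ne_top ENNReal.ofReal_ne_top hvar)
      (eVariationOn.mono γ hs)
  have key : ∀ s t : ℝ, a ≤ s → s ≤ t → t ≤ b → ‖γ t - γ s‖ ≤ v t - v s := by
    intro s t has hst htb
    have hadd := eVariationOn.Icc_add_Icc γ (s := Icc a b) has hst ⟨has, hst.trans htb⟩
    have hW : edist (γ s) (γ t) ≤ eVariationOn γ (Icc a b ∩ Icc s t) :=
      eVariationOn.edist_le γ ⟨⟨has, hst.trans htb⟩, le_rfl, hst⟩ ⟨⟨has.trans hst, htb⟩, hst, le_rfl⟩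
    have h1 : eVariationOn γ (Icc a b ∩ Icc a s) ≠ ⊤ := hfin _ inter_subset_left
    have h2 : eVariationOn γ (Icc a b ∩ Icc s t) ≠ ⊤ := hfin _ inter_subset_left
    have hvt : v t = v s + (eVariationOn γ (Icc a b ∩ Icc s t)).toReal := by
      rw [hv]; dsimp only; rw [← hadd, ENNReal.toReal_add h1 h2]
    have : ‖γ t - γ s‖ ≤ (eVariationOn γ (Icc a b ∩ Icc s t)).toReal := by
      rw [← dist_eq_norm, dist_comm, ← ENNReal.toReal_ofReal dist_nonneg, ← edist_dist]
      exact ENNReal.toReal_mono h2 hW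
    linarith
  have hvb : v b ≤ L :=
    ENNReal.toReal_le_of_le_ofReal hL (le_trans (eVariationOn.mono γ inter_subset_left) hvar)
  have hvnn : ∀ t, 0 ≤ v t := fun t => ENNReal.toReal_nonneg
  have hva : v a = 0 := by
    rw [hv]; dsimp only
    rw [eVariationOn.subsingleton]
    · simp
    · intro p hp q hq
      have h1 : p = a := le_antisymm hp.2.2 hp.2.1
      have h2 : q = a := le_antisymm hq.2.2 hq.2.1
      rw [h1, h2]
  have main : ∀ δ : ℝ, 0 < δ → ‖g (γ b) - g (γ a)‖ ≤ (M + δ) * v b := by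
    intro δ hδ
    set A : Set ℝ := {t | t ∈ Icc a b ∧ ‖g (γ t) - g (γ a)‖ ≤ (M + δ) * v t} with hA
    have hA0 : a ∈ A := ⟨⟨le_rfl, hab⟩, by rw [hva]; simp⟩
    have hAbdd : BddAbove A := ⟨b, fun t ht => ht.1.2⟩
    have hAne : A.Nonempty := ⟨a, hA0⟩
    set c := sSup A with hcdef
    have hcmem : c ∈ Icc a b := ⟨le_csSup hAbdd hA0, csSup_le hAne fun t ht => ht.1.2⟩
    -- local estimate around c
    have hder := hg (γ c) (hγS c hcmem)
    have hlo := hder.isLittleO.def hδ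
    have hmap : MapsTo γ (Icc a b) S := fun t ht => hγS t ht
    have htend : Filter.Tendsto γ (nhdsWithin c (Icc a b)) (nhdsWithin (γ c) S) :=
      (hγc c hcmem).tendsto_nhdsWithin hmap
    have hev : ∀ᶠ t in nhdsWithin c (Icc a b),
        ‖g (γ t) - g (γ c) - (g' (γ c)) (γ t - γ c)‖ ≤ δ * ‖γ t - γ c‖ := htend.eventually hlo
    obtain ⟨η, hη, hloc0⟩ := Metric.mem_nhdsWithin_iff.1 hev
    have hloc : ∀ t ∈ Icc a b, dist t c < η → ‖g (γ t) - g (γ c)‖ ≤ (M + δ) * ‖γ t - γ c‖ := by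
      intro t ht hd
      have h1 : ‖g (γ t) - g (γ c) - (g' (γ c)) (γ t - γ c)‖ ≤ δ * ‖γ t - γ c‖ :=
        hloc0 ⟨Metric.mem_ball.2 hd, ht⟩
      have h2 : ‖(g' (γ c)) (γ t - γ c)‖ ≤ M * ‖γ t - γ c‖ :=
        le_trans ((g' (γ c)).le_opNorm _)
          (mul_le_mul_of_nonneg_right (hM c hcmem) (norm_nonneg _))
      calc ‖g (γ t) - g (γ c)‖
          ≤ ‖g (γ t) - g (γ c) - (g' (γ c)) (γ t - γ c)‖ + ‖(g' (γ c)) (γ t - γ c)‖ := by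
            have := norm_add_le (g (γ t) - g (γ c) - (g' (γ c)) (γ t - γ c)) ((g' (γ c)) (γ t - γ c))
            simpa using this
      _ ≤ δ * ‖γ t - γ c‖ + M * ‖γ t - γ c‖ := add_le_add h1 h2
      _ = (M + δ) * ‖γ t - γ c‖ := by ring
    have hcA : c ∈ A := by
      obtain ⟨t, htA, htc⟩ := exists_lt_of_lt_csSup hAne (by linarith : c - η < c)
      have htlec : t ≤ c := le_csSup hAbdd htA
      have hdist : dist t c < η := by rw [Real.dist_eq, abs_of_nonpos (by linarith)]; linarith
      have h1 := hloc t htA.1 hdist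
      have h2 := key t c htA.1.1 htlec hcmem.2
      have h3 : ‖g (γ c) - g (γ a)‖ ≤ ‖g (γ c) - g (γ t)‖ + ‖g (γ t) - g (γ a)‖ := by
        have := dist_triangle (g (γ c)) (g (γ t)) (g (γ a))
        simpa [dist_eq_norm] using this
      have h4 : ‖g (γ c) - g (γ t)‖ = ‖g (γ t) - g (γ c)‖ := norm_sub_rev _ _
      refine ⟨hcmem, ?_⟩
      have h5 : ‖γ t - γ c‖ = ‖γ c - γ t‖ := norm_sub_rev _ _
      have h6 : (M + δ) * ‖γ t - γ c‖ ≤ (M + δ) * (v c - v t) := by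
        rw [h5]
        exact mul_le_mul_of_nonneg_left h2 (by linarith)
      calc ‖g (γ c) - g (γ a)‖ ≤ ‖g (γ t) - g (γ c)‖ + ‖g (γ t) - g (γ a)‖ := by rw [← h4]; exact h3
      _ ≤ (M + δ) * (v c - v t) + (M + δ) * v t := add_le_add (h1.trans h6) htA.2
      _ = (M + δ) * v c := by ring
    have hcb : c = b := by
      by_contra hne
      have hclt : c < b := lt_of_le_of_ne hcmem.2 hne
      set t := min b (c + η / 2) with ht
      have htmem : t ∈ Icc a b := ⟨le_min hab (by linarith [hcmem.1]), min_le_left _ _⟩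
      have hct : c < t := lt_min hclt (by linarith)
      have hdist : dist t c < η := by
        rw [Real.dist_eq, abs_of_nonneg (by linarith [hct.le])]
        have : t ≤ c + η / 2 := min_le_right _ _
        linarith
      have h1 := hloc t htmem hdist
      have h2 := key c t hcmem.1 hct.le htmem.2
      have htA : t ∈ A := by
        refine ⟨htmem, ?_⟩
        have h3 : ‖g (γ t) - g (γ a)‖ ≤ ‖g (γ t) - g (γ c)‖ + ‖g (γ c) - g (γ a)‖ := by
          have := dist_triangle (g (γ t)) (g (γ c)) (g (γ a))
          simpa [dist_eq_norm] using this
        calc ‖g (γ t) - g (γ a)‖ ≤ ‖g (γ t) - g (γ c)‖ + ‖g (γ c) - g (γ a)‖ := h3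
        _ ≤ (M + δ) * (v t - v c) + (M + δ) * v c :=
            add_le_add (h1.trans (mul_le_mul_of_nonneg_left h2 (by linarith))) hcA.2
        _ = (M + δ) * v t := by ring
      exact absurd (le_csSup hAbdd htA) (not_le.2 hct)
    have := hcA.2
    rwa [hcb] at this
  rcases eq_or_lt_of_le hL with hL0 | hLpos
  · have h := main 1 one_pos
    have : v b ≤ 0 := by rw [← hL0] at hvb; exact hvb
    have hvb0 : v b = 0 := le_antisymm this (hvnn b)
    rw [hvb0, mul_zero] at h
    rw [← hL0, mul_zero]
    exact h
  · refine le_of_forall_pos_le_add fun ε hε => ?_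
    have h := main (ε / L) (div_pos hε hLpos)
    calc ‖g (γ b) - g (γ a)‖ ≤ (M + ε / L) * v b := h
    _ ≤ (M + ε / L) * L := mul_le_mul_of_nonneg_left hvb (by positivity)
    _ = M * L + ε := by field_simp
lemma taylor_quasiconvex {m : ℕ} {S : Set (EuclideanSpace ℝ (Fin m))}
    {f : EuclideanSpace ℝ (Fin m) → ℝ}
    {f' : EuclideanSpace ℝ (Fin m) → (EuclideanSpace ℝ (Fin m) →L[ℝ] ℝ)}
    {f'' : EuclideanSpace ℝ (Fin m) →
      (EuclideanSpace ℝ (Fin m) →L[ℝ] EuclideanSpace ℝ (Fin m) →L[ℝ] ℝ)}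
    {K₁ M : ℝ} (hK₁ : 0 < K₁) (hS : IsQuasiconvex K₁ S)
    (hf : ∀ z ∈ S, HasFDerivWithinAt f (f' z) S z)
    (hf' : ∀ z ∈ S, HasFDerivWithinAt f' (f'' z) S z)
    (hf'' : ∀ z ∈ S, ‖f'' z‖ ≤ M) {z₀ z₁ : EuclideanSpace ℝ (Fin m)}
    (hz₀ : z₀ ∈ S) (hz₁ : z₁ ∈ S) :
    |f z₁ - f z₀ - f' z₀ (z₁ - z₀)| ≤ M * (K₁ * ‖z₁ - z₀‖) * (K₁ * ‖z₁ - z₀‖) := by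
  obtain ⟨γ, hγc, hγ0, hγ1, hγS, hvar⟩ := hS z₀ hz₀ z₁ hz₁
  set ℓ := K₁ * ‖z₁ - z₀‖ with hℓ
  have hℓ0 : 0 ≤ ℓ := by positivity
  have step1 : ∀ t ∈ Icc (0:ℝ) 1, ‖f' (γ t) - f' z₀‖ ≤ M * ℓ := by
    intro t ht
    have hsub : Icc (0:ℝ) t ⊆ Icc (0:ℝ) 1 := Icc_subset_Icc le_rfl ht.2
    have := norm_sub_le_of_deriv_along_path (g := f') (g' := f'') (S := S) (γ := γ)
      (a := 0) (b := t) ht.1 hℓ0 hf'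
      (fun s hs => hf'' (γ s) (hγS s (hsub hs)))
      (hγc.mono hsub) (fun s hs => hγS s (hsub hs))
      ((eVariationOn.mono γ hsub).trans hvar)
    rwa [hγ0] at this
  have step2 := norm_sub_le_of_deriv_along_path
      (g := fun u => f u - f' z₀ u) (g' := fun z => f' z - f' z₀) (S := S) (γ := γ)
      (a := 0) (b := 1) zero_le_one hℓ0
      (fun z hz => (hf z hz).sub ((f' z₀).hasFDerivWithinAt))
      step1 hγc hγS hvar
  rw [hγ0, hγ1] at step2
  have heq : f z₁ - f' z₀ z₁ - (f z₀ - f' z₀ z₀) = f z₁ - f z₀ - f' z₀ (z₁ - z₀) := by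
    rw [map_sub]; ring
  calc |f z₁ - f z₀ - f' z₀ (z₁ - z₀)| = ‖f z₁ - f' z₀ z₁ - (f z₀ - f' z₀ z₀)‖ := by
        rw [Real.norm_eq_abs, heq]
  _ ≤ M * ℓ * ℓ := step2

lemma msupp_compl_null {X : Type*} [MetricSpace X] [MeasurableSpace X]
    [SecondCountableTopology X] (μ : Measure X) : μ (msupp μ)ᶜ = 0 := by
  obtain ⟨B, hBc, -, hB⟩ := TopologicalSpace.exists_countable_basis X
  set N := {t ∈ B | μ t = 0} with hN
  have h1 : (msupp μ)ᶜ ⊆ ⋃₀ N := by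
    intro y hy
    simp only [msupp, mem_compl_iff, mem_setOf_eq, not_forall] at hy
    obtain ⟨ρ, hρ, h⟩ := hy
    have hball : μ (Metric.ball y ρ) = 0 := by
      by_contra h'
      exact h (by exact pos_iff_ne_zero.2 h')
    obtain ⟨t, htB, hyt, hts⟩ := hB.exists_subset_of_mem_open (Metric.mem_ball_self hρ)
      Metric.isOpen_ball
    exact ⟨t, ⟨htB, le_antisymm (hball ▸ measure_mono hts) (by simp)⟩, hyt⟩
  refine measure_mono_null h1 ?_
  exact (measure_sUnion_null_iff (hBc.mono (sep_subset _ _))).2 fun t ht => ht.2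
set_option maxHeartbeats 2000000 in
/-- Square-root decay for neighborhoods of graphs: if `μ` is absolutely `α`-decaying,
Federer and compactly supported, `S` is `K₁`-quasiconvex and `‖f''‖_S ≤ K₂/ρ`, then
for balls `B = B(x,ρ)` centered on the support (`ρ ≤ ρ₀`) and `0 < ε ≤ 1`,
`μ((B ∩ Γ)^{(ερ)}) ≤ C ε^{α/2} μ((B ∩ Γ)^{(√ε ρ)})` with `C = C(K₁,K₂,μ)`. -/
theorem graph_neighborhood_sqrt_decay (α K₁ K₂ : ℝ) (hα : 0 < α) (hK₁ : 0 < K₁)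
    (hK₂ : 0 < K₂) (μ : Measure (EuclideanSpace ℝ (Fin (m + 1))))
    (Cd CF ρ₀ : ℝ) (hCd : 0 < Cd) (hCF : 0 < CF) (hρ₀ : 0 < ρ₀)
    (hdec : AbsDecaying α Cd ρ₀ μ) (hFed : Federer CF ρ₀ μ)
    (hcpt : IsCompact (msupp μ)) :
    ∃ C > (0 : ℝ), ∀ (S : Set (EuclideanSpace ℝ (Fin m)))
      (f : EuclideanSpace ℝ (Fin m) → ℝ)
      (f' : EuclideanSpace ℝ (Fin m) → (EuclideanSpace ℝ (Fin m) →L[ℝ] ℝ))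
      (f'' : EuclideanSpace ℝ (Fin m) →
        (EuclideanSpace ℝ (Fin m) →L[ℝ] EuclideanSpace ℝ (Fin m) →L[ℝ] ℝ))
      (x : EuclideanSpace ℝ (Fin (m + 1))) (ρ ε : ℝ),
      IsQuasiconvex K₁ S →
      (∀ z ∈ S, HasFDerivWithinAt f (f' z) S z) →
      (∀ z ∈ S, HasFDerivWithinAt f' (f'' z) S z) →
      (∀ z ∈ S, ‖f'' z‖ ≤ K₂ / ρ) →
      x ∈ msupp μ → 0 < ρ → ρ ≤ ρ₀ → 0 < ε → ε ≤ 1 →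
      μ (cthickening (ε * ρ) (closedBall x ρ ∩ graphOf S f)) ≤
        ENNReal.ofReal (C * ε ^ (α / 2)) *
          μ (cthickening (Real.sqrt ε * ρ) (closedBall x ρ ∩ graphOf S f)) := by
  classical
  set c : ℝ := 2 + 9 * K₁^2 * K₂ with hcdef
  have hc : (0:ℝ) < c := by positivity
  refine ⟨(9:ℝ) ^ (α/2) + Cd * c ^ α * CF^2 + 1, by positivity, ?_⟩
  set C : ℝ := (9:ℝ) ^ (α/2) + Cd * c ^ α * CF^2 + 1 with hCdef
  have hCaux : 0 ≤ Cd * c ^ α * CF^2 := by positivity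
  intro S f f' f'' x ρ ε hQC hf hf' hf'' hx hρ hρρ₀ hε hε1
  set T := closedBall x ρ ∩ graphOf S f with hT
  by_cases hε9 : ε ≤ 1/9
  case neg =>
    push_neg at hε9
    have h1 : cthickening (ε * ρ) T ⊆ cthickening (Real.sqrt ε * ρ) T := by
      apply cthickening_mono
      have hs2 := Real.sq_sqrt hε.le
      have hs0 := Real.sqrt_nonneg ε
      have hs1 : Real.sqrt ε ≤ 1 := Real.sqrt_le_one.2 hε1
      have hεs : ε ≤ Real.sqrt ε := by nlinarith [mul_nonneg hs0 (sub_nonneg.2 hs1)]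
      exact mul_le_mul_of_nonneg_right hεs hρ.le
    have h2 : (1:ℝ) ≤ C * ε ^ (α/2) := by
      have e1 : (9:ℝ)^(α/2) * (1/9:ℝ)^(α/2) = 1 := by
        rw [← Real.mul_rpow (by norm_num) (by norm_num)]
        norm_num
      have e2 : (1/9:ℝ)^(α/2) ≤ ε^(α/2) := Real.rpow_le_rpow (by norm_num) hε9.le (by positivity)
      have e3 : (9:ℝ)^(α/2) ≤ C := by rw [hCdef]; linarith
      have e4 : (0:ℝ) ≤ (9:ℝ)^(α/2) := by positivity
      nlinarith [Real.rpow_nonneg (show (0:ℝ) ≤ ε from hε.le) (α/2)]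
    calc μ (cthickening (ε * ρ) T) ≤ μ (cthickening (Real.sqrt ε * ρ) T) := measure_mono h1
    _ = 1 * μ (cthickening (Real.sqrt ε * ρ) T) := (one_mul _).symm
    _ ≤ ENNReal.ofReal (C * ε ^ (α/2)) * μ (cthickening (Real.sqrt ε * ρ) T) :=
        mul_le_mul_left (ENNReal.one_le_ofReal.2 h2) _
  case pos =>
  set u := Real.sqrt ε * ρ with hudef
  have hsqpos : 0 < Real.sqrt ε := Real.sqrt_pos.2 hε
  have hupos : 0 < u := by positivity
  have hsq3 : Real.sqrt ε ≤ 1/3 := by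
    rw [show (1/3:ℝ) = Real.sqrt (1/9) by
      rw [show (1/9:ℝ) = (1/3)^2 by norm_num, Real.sqrt_sq (by norm_num)]]
    exact Real.sqrt_le_sqrt hε9
  have hsqsq : Real.sqrt ε * Real.sqrt ε = ε := Real.mul_self_sqrt hε.le
  have hεu : ε * ρ ≤ u / 3 := by
    rw [hudef]
    nlinarith [hρ.le, hsqpos.le]
  have huρ : 3 * u ≤ ρ := by rw [hudef]; nlinarith
  have huρ₀ : u ≤ ρ₀ := le_trans (by linarith) hρρ₀
  have hu2 : u * u = ε * (ρ * ρ) := by rw [hudef]; linear_combination (ρ*ρ) * hsqsq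
  have hch : ∀ y, y ∈ cthickening (ε * ρ) T → ∃ p ∈ T, dist y p ≤ 2 * (ε * ρ) := by
    intro y hy
    have h1 : EMetric.infEdist y T ≤ ENNReal.ofReal (ε * ρ) := mem_cthickening_iff.1 hy
    have h2 : EMetric.infEdist y T < ENNReal.ofReal (2 * (ε * ρ)) :=
      lt_of_le_of_lt h1 ((ENNReal.ofReal_lt_ofReal_iff (by positivity)).2 (by nlinarith))
    obtain ⟨p, hp, hd⟩ := EMetric.infEdist_lt_iff.1 h2
    refine ⟨p, hp, ?_⟩
    rw [edist_dist] at hd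
    exact ((ENNReal.ofReal_lt_ofReal_iff_of_nonneg dist_nonneg).1 hd).le
  set A := msupp μ ∩ cthickening (ε * ρ) T with hA
  obtain ⟨U, hUA, hUdisj, hUcov⟩ :=
    Vitali.exists_disjoint_subfamily_covering_enlargement_closedBall A id (fun _ => u/4) (u/4)
      (fun _ _ => le_rfl) 4 (by norm_num)
  have hsep : ∀ p ∈ U, ∀ q ∈ U, p ≠ q → u/2 < dist p q := by
    intro p hp q hq hne
    by_contra hle
    push_neg at hle
    have hdisj := hUdisj hp hq hne
    have hnrm2 : ‖(2:ℝ)‖⁻¹ = (1/2 : ℝ) := by norm_num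
    have hm1 : midpoint ℝ p q ∈ closedBall (id p) (u/4) := by
      simp only [id_eq, mem_closedBall]
      rw [dist_midpoint_left, hnrm2]
      linarith
    have hm2 : midpoint ℝ p q ∈ closedBall (id q) (u/4) := by
      simp only [id_eq, mem_closedBall]
      rw [dist_midpoint_right, hnrm2]
      linarith
    exact (Set.disjoint_left.1 hdisj hm1) hm2
  have hAsub : A ⊆ closedBall x (2*ρ) := by
    intro a ha
    obtain ⟨p, hpT, hd⟩ := hch a ha.2
    have h1 : dist p x ≤ ρ := mem_closedBall.1 hpT.1
    have h2 := dist_triangle a p x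
    rw [mem_closedBall]
    linarith [hεu, huρ]
  have hUfin : U.Finite := by
    obtain ⟨tc, -, htfin, htcov⟩ := (isCompact_closedBall x (2*ρ)).finite_cover_balls
      (show 0 < u/4 by positivity)
    have hsub : U ⊆ ⋃ y ∈ tc, (U ∩ ball y (u/4)) := by
      intro p hp
      obtain ⟨y, hy, hmem⟩ := mem_iUnion₂.1 (htcov (hAsub (hUA hp)))
      exact mem_iUnion₂.2 ⟨y, hy, hp, hmem⟩
    refine Set.Finite.subset (htfin.biUnion fun y _ => ?_) hsub
    refine Set.Subsingleton.finite ?_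
    intro p hp q hq
    by_contra hne
    have h0 := hsep p hp.1 q hq.1 hne
    have hpy := mem_ball.1 hp.2
    have hqy := mem_ball.1 hq.2
    have h2 := dist_triangle p y q
    rw [dist_comm y q] at h2
    linarith
  have hcovA : A ⊆ ⋃ b ∈ hUfin.toFinset, (closedBall b u ∩ cthickening (ε * ρ) T) := by
    intro a ha
    obtain ⟨b, hbU, hsub⟩ := hUcov a ha
    have hab : a ∈ closedBall b u := by
      have h1 := hsub (mem_closedBall_self (by positivity))
      rw [show (4:ℝ)*(u/4) = u by ring] at h1
      exact h1
    exact mem_iUnion₂.2 ⟨b, hUfin.mem_toFinset.2 hbU, hab, ha.2⟩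
  have hsmall : ∀ b ∈ U, closedBall b (u/4) ⊆ cthickening (Real.sqrt ε * ρ) T := by
    intro b hbU y hy
    obtain ⟨p, hpT, hd⟩ := hch b (hUA hbU).2
    rw [mem_closedBall] at hy
    rw [mem_cthickening_iff]
    calc EMetric.infEdist y T ≤ edist y p := EMetric.infEdist_le_edist_of_mem hpT
    _ = ENNReal.ofReal (dist y p) := edist_dist y p
    _ ≤ ENNReal.ofReal (Real.sqrt ε * ρ) := by
        apply ENNReal.ofReal_le_ofReal
        have h2 := dist_triangle y b p
        rw [← hudef]
        linarith [hεu]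
  have hkey : ∀ b ∈ U, μ (closedBall b u ∩ cthickening (ε * ρ) T) ≤
      ENNReal.ofReal (Cd * (c * Real.sqrt ε) ^ α) * μ (closedBall b u) := by
    intro b hbU
    obtain ⟨hbs, hbt⟩ := hUA hbU
    obtain ⟨p, hpT, hbp⟩ := hch b hbt
    obtain ⟨z₀, hz₀S, hpz⟩ := hpT.2
    have hpz' : p = esnoc z₀ (f z₀) := hpz
    have hpB : dist p x ≤ ρ := mem_closedBall.1 hpT.1
    set g : EuclideanSpace ℝ (Fin m) →L[ℝ] ℝ := f' z₀ with hgdef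
    set v : EuclideanSpace ℝ (Fin m) :=
      (InnerProductSpace.toDual ℝ (EuclideanSpace ℝ (Fin m))).symm g with hvdef
    have hvapp : ∀ u' : EuclideanSpace ℝ (Fin m), ⟪v, u'⟫ = g u' := fun u' =>
      InnerProductSpace.toDual_symm_apply
    set w : EuclideanSpace ℝ (Fin (m+1)) := esnoc (-v) 1 with hwdef
    have hwne : w ≠ 0 := esnoc_ne_zero _
    set t' : ℝ := f z₀ - g z₀ with ht'def
    have hw1 : 1 ≤ ‖w‖ := one_le_norm_esnoc_one _
    have hwpos : (0:ℝ) < ‖w‖ := lt_of_lt_of_le one_pos hw1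
    have hinner : ∀ z : EuclideanSpace ℝ (Fin m), ⟪esnoc z (f z), w⟫ = f z - g z := by
      intro z
      rw [hwdef, inner_esnoc_esnoc, inner_neg_right, real_inner_comm, hvapp]
      ring
    have hsubkey : closedBall b u ∩ cthickening (ε * ρ) T ⊆
        closedBall b u ∩ cthickening ((c * Real.sqrt ε) * u) {y | ⟪y, w⟫ = t'} := by
      rintro q ⟨hq1, hq2⟩
      refine ⟨hq1, ?_⟩
      obtain ⟨p', hp'T, hqp'⟩ := hch q hq2
      obtain ⟨z', hz'S, hp'z⟩ := hp'T.2
      have hp'z' : p' = esnoc z' (f z') := hp'z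
      have hdzp : ‖z' - z₀‖ ≤ ‖p' - p‖ := by
        rw [hp'z', hpz', esnoc_sub_esnoc]
        exact norm_fst_le_norm_esnoc _ _
      have hppd : ‖p' - p‖ ≤ 3 * u := by
        rw [← dist_eq_norm]
        have t1 := dist_triangle p' q b
        have t2 := dist_triangle p' b p
        have hqb : dist q b ≤ u := mem_closedBall.1 hq1
        rw [dist_comm p' q] at t1
        linarith [hεu]
      have hdz3 : ‖z' - z₀‖ ≤ 3 * u := hdzp.trans hppd
      have htay := taylor_quasiconvex hK₁ hQC hf hf' hf'' hz₀S hz'S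
      have htay2 : |f z' - f z₀ - g (z' - z₀)| ≤ 9 * K₁^2 * K₂ * (ε * ρ) := by
        refine htay.trans ?_
        have h1 : (K₂/ρ) * (K₁ * ‖z' - z₀‖) * (K₁ * ‖z' - z₀‖)
            = K₂ * K₁^2 * (‖z' - z₀‖ * ‖z' - z₀‖) / ρ := by ring
        rw [h1, div_le_iff₀ hρ]
        have h9 : ‖z' - z₀‖ * ‖z' - z₀‖ ≤ 9 * (u * u) := by
          nlinarith [norm_nonneg (z' - z₀), hupos.le]
        calc K₂ * K₁^2 * (‖z' - z₀‖ * ‖z' - z₀‖) ≤ K₂ * K₁^2 * (9 * (u * u)) := by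
              have : (0:ℝ) ≤ K₂ * K₁^2 := by positivity
              nlinarith
        _ = 9 * K₁^2 * K₂ * (ε * ρ) * ρ := by rw [hu2]; ring
      have hiq : |⟪p', w⟫ - t'| ≤ 9 * K₁^2 * K₂ * (ε * ρ) := by
        rw [hp'z', hinner z', ht'def]
        have hring : f z' - g z' - (f z₀ - g z₀) = f z' - f z₀ - g (z' - z₀) := by
          rw [map_sub]; ring
        rw [hring]
        exact htay2
      set sP : ℝ := ⟪p', w⟫ - t' with hsP
      set P : EuclideanSpace ℝ (Fin (m+1)) := p' - (sP / ‖w‖^2) • w with hPdef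
      have hPL : P ∈ {y : EuclideanSpace ℝ (Fin (m+1)) | ⟪y, w⟫ = t'} := by
        have hww : ⟪w, w⟫ = ‖w‖^2 := real_inner_self_eq_norm_sq w
        have hw2 : (‖w‖:ℝ)^2 ≠ 0 := ne_of_gt (by positivity)
        show ⟪p' - (sP / ‖w‖^2) • w, w⟫ = t'
        rw [inner_sub_left, real_inner_smul_left, hww, div_mul_cancel₀ _ hw2, hsP]
        ring
      have hdP : dist p' P ≤ |sP| := by
        rw [hPdef, dist_eq_norm, sub_sub_cancel, norm_smul, Real.norm_eq_abs, abs_div,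
          abs_of_nonneg (by positivity : (0:ℝ) ≤ ‖w‖^2)]
        rw [div_mul_eq_mul_div, pow_two]
        rw [show |sP| * ‖w‖ / (‖w‖ * ‖w‖) = |sP| / ‖w‖ by
          rw [mul_comm ‖w‖ ‖w‖, ← div_div, mul_div_assoc, div_self (ne_of_gt hwpos), mul_one]]
        exact div_le_self (abs_nonneg _) hw1
      have hfinal : EMetric.infEdist q {y : EuclideanSpace ℝ (Fin (m+1)) | ⟪y, w⟫ = t'}
          ≤ ENNReal.ofReal ((c * Real.sqrt ε) * u) := by
        calc EMetric.infEdist q {y : EuclideanSpace ℝ (Fin (m+1)) | ⟪y, w⟫ = t'}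
            ≤ edist q p' + EMetric.infEdist p' {y : EuclideanSpace ℝ (Fin (m+1)) | ⟪y, w⟫ = t'} :=
              EMetric.infEdist_le_edist_add_infEdist
        _ ≤ ENNReal.ofReal (2*(ε*ρ)) + ENNReal.ofReal (9 * K₁^2 * K₂ * (ε * ρ)) := by
            refine add_le_add ?_ ?_
            · rw [edist_dist]
              exact ENNReal.ofReal_le_ofReal hqp'
            · refine le_trans (EMetric.infEdist_le_edist_of_mem hPL) ?_
              rw [edist_dist]
              exact ENNReal.ofReal_le_ofReal (hdP.trans hiq)
        _ = ENNReal.ofReal ((c * Real.sqrt ε) * u) := by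
            rw [← ENNReal.ofReal_add (by positivity) (by positivity)]
            congr 1
            rw [hudef, hcdef]
            linear_combination (-(2 + 9 * K₁^2 * K₂) * ρ) * hsqsq
      exact mem_cthickening_iff.2 hfinal
    calc μ (closedBall b u ∩ cthickening (ε * ρ) T)
        ≤ μ (closedBall b u ∩ cthickening ((c * Real.sqrt ε) * u) {y | ⟪y, w⟫ = t'}) :=
          measure_mono hsubkey
    _ ≤ ENNReal.ofReal (Cd * (c * Real.sqrt ε) ^ α) * μ (closedBall b u) :=
          hdec b hbs u hupos huρ₀ w t' hwne (c * Real.sqrt ε) (mul_pos hc hsqpos)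
  have hFed2 : ∀ b ∈ U, μ (closedBall b u) ≤
      ENNReal.ofReal (CF * CF) * μ (closedBall b (u/4)) := by
    intro b hbU
    have hbs := (hUA hbU).1
    have h1 := hFed b hbs (u/2) (by positivity) (le_trans (by linarith) huρ₀)
    have h2 := hFed b hbs (u/4) (by positivity) (le_trans (by linarith) huρ₀)
    rw [show (2:ℝ)*(u/2) = u by ring] at h1
    rw [show (2:ℝ)*(u/4) = u/2 by ring] at h2
    calc μ (closedBall b u) ≤ ENNReal.ofReal CF * μ (closedBall b (u/2)) := h1
    _ ≤ ENNReal.ofReal CF * (ENNReal.ofReal CF * μ (closedBall b (u/4))) := mul_le_mul_right h2 _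
    _ = ENNReal.ofReal (CF * CF) * μ (closedBall b (u/4)) := by
        rw [← mul_assoc, ← ENNReal.ofReal_mul hCF.le]
  have hμcompl : μ (msupp μ)ᶜ = 0 := msupp_compl_null μ
  have hstep0 : μ (cthickening (ε*ρ) T) ≤ μ A := by
    calc μ (cthickening (ε*ρ) T) ≤ μ (A ∪ (msupp μ)ᶜ) := by
          refine measure_mono fun y hy => ?_
          by_cases hyms : y ∈ msupp μ
          · exact Or.inl ⟨hyms, hy⟩
          · exact Or.inr hyms
    _ ≤ μ A + μ (msupp μ)ᶜ := measure_union_le _ _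
    _ = μ A := by rw [hμcompl, add_zero]
  have hdisj' : (↑hUfin.toFinset : Set (EuclideanSpace ℝ (Fin (m+1)))).PairwiseDisjoint
      (fun b => closedBall b (u/4)) := by
    rw [hUfin.coe_toFinset]
    exact hUdisj
  have hstep2 : ∑ b ∈ hUfin.toFinset, μ (closedBall b (u/4))
      ≤ μ (cthickening (Real.sqrt ε * ρ) T) := by
    rw [← measure_biUnion_finset hdisj' (fun b _ => measurableSet_closedBall)]
    refine measure_mono (iUnion₂_subset fun b hb => hsmall b (hUfin.mem_toFinset.1 hb))
  have hconst : ENNReal.ofReal (Cd * (c * Real.sqrt ε) ^ α) * ENNReal.ofReal (CF * CF)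
      ≤ ENNReal.ofReal (C * ε ^ (α/2)) := by
    rw [← ENNReal.ofReal_mul (by positivity)]
    apply ENNReal.ofReal_le_ofReal
    have e1 : (c * Real.sqrt ε) ^ α = c ^ α * ε ^ (α/2) := by
      rw [Real.mul_rpow hc.le (Real.sqrt_nonneg _), Real.sqrt_eq_rpow,
        ← Real.rpow_mul hε.le, show (1:ℝ)/2 * α = α/2 by ring]
    rw [e1]
    have e2 : Cd * (c ^ α * ε ^ (α/2)) * (CF * CF) = (Cd * c ^ α * CF^2) * ε ^ (α/2) := by ring
    rw [e2]
    refine mul_le_mul_of_nonneg_right ?_ (Real.rpow_nonneg hε.le _)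
    rw [hCdef]
    have : (0:ℝ) ≤ (9:ℝ) ^ (α/2) := by positivity
    linarith
  calc μ (cthickening (ε*ρ) T) ≤ μ A := hstep0
  _ ≤ μ (⋃ b ∈ hUfin.toFinset, (closedBall b u ∩ cthickening (ε * ρ) T)) := measure_mono hcovA
  _ ≤ ∑ b ∈ hUfin.toFinset, μ (closedBall b u ∩ cthickening (ε * ρ) T) :=
      measure_biUnion_finset_le _ _
  _ ≤ ∑ b ∈ hUfin.toFinset, ENNReal.ofReal (Cd * (c * Real.sqrt ε) ^ α) *
        (ENNReal.ofReal (CF * CF) * μ (closedBall b (u/4))) := by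
      refine Finset.sum_le_sum fun b hb => ?_
      have hbU := hUfin.mem_toFinset.1 hb
      exact (hkey b hbU).trans (mul_le_mul_right (hFed2 b hbU) _)
  _ = (ENNReal.ofReal (Cd * (c * Real.sqrt ε) ^ α) * ENNReal.ofReal (CF * CF)) *
        ∑ b ∈ hUfin.toFinset, μ (closedBall b (u/4)) := by
      rw [Finset.mul_sum]
      congr 1
      ext b
      rw [mul_assoc]
  _ ≤ (ENNReal.ofReal (Cd * (c * Real.sqrt ε) ^ α) * ENNReal.ofReal (CF * CF)) *
        μ (cthickening (Real.sqrt ε * ρ) T) := mul_le_mul_right hstep2 _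
  _ ≤ ENNReal.ofReal (C * ε ^ (α/2)) * μ (cthickening (Real.sqrt ε * ρ) T) :=
      mul_le_mul_left hconst _
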